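/- A one-slot quantum comb maps channels to channels: let H_0, H_1, H_2, H_3 be finite-dimensional complex Hilbert spaces and let R be a positive semidefinite operator on H_3 ⊗ H_2 ⊗ H_1 ⊗ H_0 satisfying the one-slot comb constraints: Tr_3[R] = I_2 ⊗ S for some positive semidefinite operator S on H_1 ⊗ H_0 with Tr_1[S] = I_0. Let C be the Choi operator of any completely positive trace-preserving map from matrices on H_1 to matrices on H_2 (i.e., C is a positive semidefinite operator on H_2 ⊗ H_1 with Tr_2[C] = I_1). Then the link product C' = C * R over the wires H_1 and H_2 is a positive semidefinite operator on H_3 ⊗ H_0 satisfying Tr_3[C'] = I_0; that is, C' is the Choi operator of a quantum channel from matrices on H_0 to matrices on H_3. -/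

import Mathlib

open Matrix Kronecker ComplexOrder

/-- The partial trace over the first tensor factor:
`(Tr_J M)_{a,b} = Σ_j M_{(j,a),(j,b)}`. -/
noncomputable def ptraceFst {j a : Type*} [Fintype j]
    (M : Matrix (j × a) (j × a) ℂ) : Matrix a a ℂ :=
  fun x y => ∑ k, M (k, x) (k, y)

/-- The link product `C' = C * R` of the Choi operator `C` (on `H₂ ⊗ H₁`) of an inserted
channel with the Choi operator `R` of a one-slot comb (on `H₃ ⊗ H₂ ⊗ H₁ ⊗ H₀`), taken over
the connected wires `H₁` and `H₂`:  `C * R = Tr_{21}[(Cᶿ ⊗ I_{3,0}) R]`, where `Cᶿ` is the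
partial transpose of `C` over the connected wires (i.e. the full transpose of `C`, as all of
its wires are connected), the identity factors are inserted on the spectator wires `H₃, H₀`
in the tensor fashion, and `Tr_{21}` is the partial trace over `H₂ ⊗ H₁`. -/
noncomputable def linkInsert {h0 h1 h2 h3 : Type*}
    [Fintype h0] [Fintype h1] [Fintype h2] [Fintype h3] [DecidableEq h0] [DecidableEq h3]
    (C : Matrix (h2 × h1) (h2 × h1) ℂ)
    (R : Matrix (h3 × (h2 × (h1 × h0))) (h3 × (h2 × (h1 × h0))) ℂ) :
    Matrix (h3 × h0) (h3 × h0) ℂ :=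
  fun p q => ∑ k2 : h2, ∑ k1 : h1,
    ((Matrix.reindex ((Equiv.refl h3).prodCongr (Equiv.prodAssoc h2 h1 h0))
        ((Equiv.refl h3).prodCongr (Equiv.prodAssoc h2 h1 h0))
        ((1 : Matrix h3 h3 ℂ) ⊗ₖ (Cᵀ ⊗ₖ (1 : Matrix h0 h0 ℂ)))) * R)
      (p.1, (k2, (k1, p.2))) (q.1, (k2, (k1, q.2)))

lemma linkInsert_apply {h0 h1 h2 h3 : Type*}
    [Fintype h0] [Fintype h1] [Fintype h2] [Fintype h3] [DecidableEq h0] [DecidableEq h3]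
    (C : Matrix (h2 × h1) (h2 × h1) ℂ)
    (R : Matrix (h3 × (h2 × (h1 × h0))) (h3 × (h2 × (h1 × h0))) ℂ) (p q : h3 × h0) :
    linkInsert C R p q = ∑ k : h2 × h1, ∑ j : h2 × h1,
      C j k * R (p.1, (j.1, (j.2, p.2))) (q.1, (k.1, (k.2, q.2))) := by
  unfold linkInsert
  rw [Fintype.sum_prod_type]
  refine Finset.sum_congr rfl fun k2 _ => Finset.sum_congr rfl fun k1 _ => ?_
  rw [Matrix.mul_apply]
  rw [Fintype.sum_prod_type]
  simp only [Matrix.reindex_apply, Matrix.submatrix_apply, Equiv.prodCongr_symm,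
    Equiv.refl_symm, Equiv.prodCongr_apply, Equiv.coe_refl, Prod.map, id_eq,
    Equiv.prodAssoc_symm_apply, Matrix.kroneckerMap_apply, Matrix.one_apply,
    Matrix.transpose_apply]
  simp [Fintype.sum_prod_type, ite_mul, mul_ite, Finset.sum_ite_eq, Finset.sum_ite_eq',
    mul_comm, mul_assoc, mul_left_comm]

lemma star_ite01 (P : Prop) [Decidable P] : star (if P then (1:ℂ) else 0) = if P then 1 else 0 := by
  split <;> simp

noncomputable def insB (h0 h3 : Type*) {h1 h2 : Type*} [DecidableEq h0] [DecidableEq h3]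
    (A : Matrix (h2 × h1) (h2 × h1) ℂ) (m : h2 × h1) :
    Matrix (h3 × (h2 × (h1 × h0))) (h3 × h0) ℂ :=
  fun s r => A m (s.2.1, s.2.2.1) *
    ((if s.1 = r.1 then 1 else 0) * (if s.2.2.2 = r.2 then 1 else 0))

lemma linkInsert_decomp {h0 h1 h2 h3 : Type*}
    [Fintype h0] [Fintype h1] [Fintype h2] [Fintype h3] [DecidableEq h0] [DecidableEq h3]
    (A : Matrix (h2 × h1) (h2 × h1) ℂ)
    (R : Matrix (h3 × (h2 × (h1 × h0))) (h3 × (h2 × (h1 × h0))) ℂ) :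
    linkInsert (Aᴴ * A) R
      = ∑ m : h2 × h1, (insB h0 h3 A m)ᴴ * R * (insB h0 h3 A m) := by
  ext p q
  rw [Matrix.sum_apply]
  have rhs : ∀ m : h2 × h1, ((insB h0 h3 A m)ᴴ * R * insB h0 h3 A m) p q
      = ∑ k : h2 × h1, ∑ j : h2 × h1,
        (starRingEnd ℂ) (A m j) * A m k *
          R (p.1, (j.1, (j.2, p.2))) (q.1, (k.1, (k.2, q.2))) := by
    intro m
    simp only [Matrix.mul_apply, Matrix.conjTranspose_apply, insB, star_mul',
      star_ite01, star_one, star_zero]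
    simp only [Fintype.sum_prod_type]
    simp [ite_mul, mul_ite, Finset.sum_ite_eq, Finset.sum_ite_eq', Finset.mul_sum,
      Finset.sum_mul, mul_comm, mul_assoc, mul_left_comm]
  simp only [rhs, linkInsert_apply]
  conv_rhs => rw [Finset.sum_comm]
  refine Finset.sum_congr rfl fun k _ => ?_
  conv_rhs => rw [Finset.sum_comm]
  refine Finset.sum_congr rfl fun j _ => ?_
  rw [Matrix.mul_apply, Finset.sum_mul]
  exact Finset.sum_congr rfl fun m _ => by simp [Matrix.conjTranspose_apply]

/-- A one-slot quantum comb maps channels to channels.  Let `R ≥ 0` on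
`H₃ ⊗ H₂ ⊗ H₁ ⊗ H₀` satisfy the one-slot comb constraints `Tr₃[R] = I₂ ⊗ S` for some `S ≥ 0`
on `H₁ ⊗ H₀` with `Tr₁[S] = I₀`, and let `C ≥ 0` on `H₂ ⊗ H₁` with `Tr₂[C] = I₁` be the Choi
operator of any quantum channel from `H₁` to `H₂`.  Then the link product `C' = C * R` over
the wires `H₁, H₂` is positive semidefinite on `H₃ ⊗ H₀` and satisfies `Tr₃[C'] = I₀`, i.e.
it is the Choi operator of a quantum channel from `H₀` to `H₃`. -/
theorem one_slot_comb_maps_channels_to_channels {h0 h1 h2 h3 : Type*}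
    [Fintype h0] [Fintype h1] [Fintype h2] [Fintype h3]
    [DecidableEq h0] [DecidableEq h1] [DecidableEq h2] [DecidableEq h3]
    (R : Matrix (h3 × (h2 × (h1 × h0))) (h3 × (h2 × (h1 × h0))) ℂ)
    (S : Matrix (h1 × h0) (h1 × h0) ℂ)
    (hR : R.PosSemidef) (hS : S.PosSemidef)
    (hR3 : ptraceFst R = (1 : Matrix h2 h2 ℂ) ⊗ₖ S)
    (hS1 : ptraceFst S = 1)
    (C : Matrix (h2 × h1) (h2 × h1) ℂ)
    (hC : C.PosSemidef) (hC2 : ptraceFst C = 1) :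
    (linkInsert C R).PosSemidef ∧ ptraceFst (linkInsert C R) = 1 := by
  constructor
  · open scoped MatrixOrder in
    obtain ⟨A, rfl⟩ : ∃ A : Matrix (h2 × h1) (h2 × h1) ℂ, C = Aᴴ * A :=
      CStarAlgebra.nonneg_iff_eq_star_mul_self.mp hC.nonneg
    rw [linkInsert_decomp]
    refine Finset.sum_induction _ _ (fun a b ha hb => ha.add hb) Matrix.PosSemidef.zero
      fun m _ => hR.conjTranspose_mul_mul_same _
  · have key : ∀ x y, ptraceFst (linkInsert C R) x y = ∑ k : h2 × h1, ∑ j : h2 × h1,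
        C j k * ptraceFst R (j.1, (j.2, x)) (k.1, (k.2, y)) := by
      intro x y
      simp only [ptraceFst, linkInsert_apply]
      rw [Finset.sum_comm]
      refine Finset.sum_congr rfl fun k _ => ?_
      rw [Finset.sum_comm]
      refine Finset.sum_congr rfl fun j _ => ?_
      rw [Finset.mul_sum]
    ext x y
    rw [show (ptraceFst (linkInsert C R)) x y = _ from key x y]
    simp only [hR3, Matrix.kroneckerMap_apply, Matrix.one_apply]
    simp only [Fintype.sum_prod_type, mul_ite, ite_mul, mul_one, one_mul, mul_zero, zero_mul,
      Finset.sum_ite_eq, Finset.sum_ite_eq', Finset.mem_univ, if_true]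
    simp only [Finset.sum_ite_irrel, Finset.sum_const_zero, Finset.sum_ite_eq, Finset.sum_ite_eq',
      Finset.mem_univ, if_true]
    have step : ∀ x2 : h1, ∀ x4 : h1, (∑ x1 : h2, C (x1, x4) (x1, x2)) = if x4 = x2 then 1 else 0 := by
      intro x2 x4
      have := congrFun (congrFun hC2 x4) x2
      simpa [ptraceFst, Matrix.one_apply] using this
    calc (∑ x1 : h2, ∑ x2 : h1, ∑ x4 : h1, C (x1, x4) (x1, x2) * S (x4, x) (x2, y))
        = ∑ x2 : h1, ∑ x4 : h1, (∑ x1 : h2, C (x1, x4) (x1, x2)) * S (x4, x) (x2, y) := by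
          rw [Finset.sum_comm]
          refine Finset.sum_congr rfl fun x2 _ => ?_
          rw [Finset.sum_comm]
          refine Finset.sum_congr rfl fun x4 _ => ?_
          rw [Finset.sum_mul]
      _ = ∑ x2 : h1, S (x2, x) (x2, y) := by
          simp [step, ite_mul]
      _ = if x = y then 1 else 0 := by
          have := congrFun (congrFun hS1 x) y
          simpa [ptraceFst, Matrix.one_apply] using this
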